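/- If six faces f1,…,f6 with the same label u̇ occur in this order along a shortest face path P, and each of f1 and f6 has face-path distance at most 2 from the face f_u̇ containing u̇, then P is not shortest (a shortcut of length ≤ 4 connects f1 to f6). -/

import Mathlib

open SimpleGraph

lemma support_getElem?_eq {F : Type} {D : SimpleGraph F} {u v : F}
    (p : D.Walk u v) (n : ℕ) (h : n < p.support.length) :
    p.support[n]? = some (p.getVert n) := by
  induction p generalizing n with
  | nil =>
    have hn : n = 0 := by simpa [Nat.lt_one_iff] using h
    subst hn; simp [SimpleGraph.Walk.getVert]
  | cons hadj q ih =>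
    cases n with
    | zero => simp [SimpleGraph.Walk.getVert]
    | succ m =>
      simp only [SimpleGraph.Walk.support_cons, SimpleGraph.Walk.getVert_cons_succ]
      rw [List.getElem?_cons_succ]
      exact ih m (by simpa [SimpleGraph.Walk.support_cons] using h)

lemma exists_walk_to_getVert {F : Type} {D : SimpleGraph F} {u v : F}
    (p : D.Walk u v) (n : ℕ) :
    ∃ q : D.Walk u (p.getVert n), q.length ≤ n := by
  induction p generalizing n with
  | nil => exact ⟨SimpleGraph.Walk.nil.copy rfl (by cases n <;> rfl), by simp⟩
  | cons hadj q ih =>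
    cases n with
    | zero => exact ⟨SimpleGraph.Walk.nil.copy rfl rfl, Nat.le_of_eq rfl⟩
    | succ m =>
      obtain ⟨w, hw⟩ := ih m
      exact ⟨(w.cons hadj).copy rfl (by rw [SimpleGraph.Walk.getVert_cons_succ]),
        by simpa using Nat.succ_le_succ hw⟩

lemma exists_walk_from_getVert {F : Type} {D : SimpleGraph F} {u v : F}
    (p : D.Walk u v) (n : ℕ) (hn : n ≤ p.length) :
    ∃ q : D.Walk (p.getVert n) v, q.length ≤ p.length - n := by
  obtain ⟨w, hw⟩ := exists_walk_to_getVert p.reverse (p.length - n)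
  have hv : p.reverse.getVert (p.length - n) = p.getVert n := by
    rw [SimpleGraph.Walk.getVert_reverse, Nat.sub_sub_self hn]
  exact ⟨(w.copy rfl hv).reverse, by simpa using hw⟩

theorem stmt13 {F : Type} (D : SimpleGraph F) (a b fu f1 f6 : F)
    (P : D.Walk a b) (hshort : P.length = D.dist a b)
    (i j : ℕ) (hij : i + 4 < j) (hjlen : j < P.support.length)
    (h1 : P.support[i]? = some f1) (h6 : P.support[j]? = some f6)
    (hr1 : D.Reachable f1 fu) (hr6 : D.Reachable fu f6)
    (hd1 : D.dist f1 fu ≤ 2) (hd6 : D.dist fu f6 ≤ 2) :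
    False := by
  have hilen : i < P.support.length := lt_trans (by omega) hjlen
  have hf1 : f1 = P.getVert i := by
    rw [support_getElem?_eq P i hilen] at h1; exact (Option.some_inj.mp h1).symm
  have hf6 : f6 = P.getVert j := by
    rw [support_getElem?_eq P j hjlen] at h6; exact (Option.some_inj.mp h6).symm
  have hjle : j ≤ P.length := by
    have := P.length_support; omega
  obtain ⟨W1, hW1⟩ := exists_walk_to_getVert P i
  obtain ⟨W2, hW2⟩ := exists_walk_from_getVert P j hjle
  obtain ⟨Wm1, hWm1⟩ := hr1.exists_walk_length_eq_dist
  obtain ⟨Wm2, hWm2⟩ := hr6.exists_walk_length_eq_dist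
  have hW : ∃ W : D.Walk a b, W.length ≤ i + 4 + (P.length - j) := by
    refine ⟨W1.append (((Wm1.copy hf1 rfl).append (Wm2.copy rfl hf6)).append W2), ?_⟩
    simp only [SimpleGraph.Walk.length_append, SimpleGraph.Walk.length_copy]
    omega
  obtain ⟨W, hW⟩ := hW
  have := SimpleGraph.dist_le W
  omega
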